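/- Let S be a nilpotent semigroup of degree 3 with n elements. Then S is isomorphic to a semigroup in Z_{n,m} if and only if m = |S²|, where Z_{n,m} is the set of semigroups H({1,…,n}\{1,…,m}, ψ, 1) on {1,…,n} with ψ : ({m+1,…,n})² → {1,…,m} a function whose image contains {2,…,m}. -/

import Mathlib

/-- A nilpotent semigroup S of degree 3 with n elements is isomorphic to a semigroup in
Z_{n,m} if and only if m = |S²|.  Here {1,…,n} is modelled as Fin n with the zero z = 1
as 0, [m] as {x | x.val < m}, and A = [n] \ [m] as {x | m ≤ x.val}; membership of a
multiplication g in Z_{n,m} says: products of pairs from A lie in [m], all other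
products equal 0, and every element of [m] \ {0} is a product of a pair from A. -/
theorem stmt14 {S : Type*} [Fintype S] (n m : ℕ) (hn : Fintype.card S = n)
    (mul : S → S → S) (z : S)
    (hassoc : ∀ x y w, mul (mul x y) w = mul x (mul y w))
    (hzero : ∀ t, mul z t = z ∧ mul t z = z)
    (h3 : ∀ x y w, mul (mul x y) w = z)
    (h2 : ∃ x y, mul x y ≠ z) :
    (∃ g : Fin n → Fin n → Fin n,
        ((∀ x y : Fin n, m ≤ x.val → m ≤ y.val → (g x y).val < m) ∧
         (∀ x y : Fin n, ¬(m ≤ x.val ∧ m ≤ y.val) → (g x y).val = 0) ∧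
         (∀ b : Fin n, 0 < b.val → b.val < m →
            ∃ x y : Fin n, m ≤ x.val ∧ m ≤ y.val ∧ g x y = b)) ∧
        ∃ e : S ≃ Fin n, ∀ x y, e (mul x y) = g (e x) (e y)) ↔
      m = Set.ncard {t : S | ∃ u v, mul u v = t} := by
  classical
  obtain ⟨x0, y0, hxy⟩ := h2
  have hx0 : x0 ≠ z := fun h => hxy (h ▸ (hzero y0).1)
  have hn2 : 2 ≤ n := by
    rw [← hn]
    have h1 : ({x0, z} : Finset S).card ≤ Fintype.card S := Finset.card_le_univ _
    rwa [Finset.card_pair hx0] at h1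
  constructor
  · rintro ⟨g, ⟨hg1, hg2, hg3⟩, e, he⟩
    have hmn : m ≤ n := by
      by_contra h
      push_neg at h
      obtain ⟨x, y, hx, hy, _⟩ := hg3 ⟨1, by omega⟩ (by simp) (by omega)
      have := x.isLt
      omega
    have hm0 : 0 < m := by
      by_contra h
      push_neg at h
      have := hg1 (e z) (e z) (by omega) (by omega)
      omega
    have hez : e z = ⟨0, by omega⟩ := by
      have h1 : g (e z) (e z) = e z := by rw [← he, (hzero z).1]
      by_cases hc : m ≤ (e z).val ∧ m ≤ (e z).val
      · have h2' := hg1 _ _ hc.1 hc.2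
        rw [h1] at h2'
        exact absurd h2' (by omega)
      · have h2' := hg2 _ _ hc
        rw [h1] at h2'
        exact Fin.ext h2'
    have himg : e '' {t : S | ∃ u v, mul u v = t} = {b : Fin n | b.val < m} := by
      ext b
      constructor
      · rintro ⟨t, ⟨u, v, rfl⟩, rfl⟩
        rw [Set.mem_setOf_eq, he]
        by_cases hc : m ≤ (e u).val ∧ m ≤ (e v).val
        · exact hg1 _ _ hc.1 hc.2
        · have := hg2 _ _ hc
          omega
      · intro hb
        rcases Nat.eq_zero_or_pos b.val with h0 | h0
        · exact ⟨z, ⟨z, z, (hzero z).1⟩, by rw [hez]; exact Fin.ext h0.symm⟩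
        · obtain ⟨x, y, hx, hy, hgb⟩ := hg3 b h0 hb
          refine ⟨mul (e.symm x) (e.symm y), ⟨_, _, rfl⟩, ?_⟩
          rw [he]
          simpa using hgb
    have hcard : Set.ncard {b : Fin n | b.val < m} = m := by
      have hr : {b : Fin n | b.val < m} = Set.range (Fin.castLE hmn) := by
        ext b
        constructor
        · intro hb
          exact ⟨⟨b.val, hb⟩, Fin.ext rfl⟩
        · rintro ⟨a, rfl⟩
          exact a.isLt
      rw [hr, ← Nat.card_coe_set_eq, Nat.card_range_of_injective (Fin.castLE_injective hmn),
        Nat.card_eq_fintype_card, Fintype.card_fin]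
    rw [← Set.ncard_image_of_injective {t : S | ∃ u v, mul u v = t} e.injective, himg, hcard]
  · intro hm
    set T : Finset S := Finset.univ.filter (fun t => ∃ u v, mul u v = t) with hT
    have hsetT : (↑T : Set S) = {t : S | ∃ u v, mul u v = t} := by
      ext t; simp [hT]
    have hTcard : T.card = m := by rw [hm, ← hsetT, Set.ncard_coe_finset]
    have hzT : z ∈ T := by simp [hT]; exact ⟨z, z, (hzero z).1⟩
    have hmn : m ≤ n := by
      rw [← hTcard, ← hn]
      exact Finset.card_le_univ _
    have hm0 : 0 < m := by
      rw [← hTcard]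
      exact Finset.card_pos.mpr ⟨z, hzT⟩
    have hzmul : ∀ u w, u ∈ T → mul u w = z ∧ mul w u = z := by
      intro u w hu
      rw [hT, Finset.mem_filter] at hu
      obtain ⟨-, a, b, rfl⟩ := hu
      refine ⟨h3 a b w, ?_⟩
      rw [← hassoc]
      exact h3 w a b
    have hcT : Fintype.card {x // x ∈ T} = m := by simp [hTcard]
    have hcT' : Fintype.card {x : S // ¬ x ∈ T} = n - m := by
      rw [Fintype.card_subtype_compl, hcT, hn]
    let f0 : {x // x ∈ T} ≃ Fin m := Fintype.equivFinOfCardEq hcT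
    let f : {x // x ∈ T} ≃ Fin m := f0.trans (Equiv.swap (f0 ⟨z, hzT⟩) ⟨0, hm0⟩)
    let g' : {x : S // ¬ x ∈ T} ≃ Fin (n - m) := Fintype.equivFinOfCardEq hcT'
    have hmn' : m + (n - m) = n := Nat.add_sub_cancel' hmn
    let e : S ≃ Fin n :=
      (Equiv.sumCompl (· ∈ T)).symm.trans ((f.sumCongr g').trans
        (finSumFinEquiv.trans (finCongr hmn')))
    have heT : ∀ x (hx : x ∈ T), (e x).val = (f ⟨x, hx⟩).val := by
      intro x hx
      simp [e, Equiv.sumCompl_symm_apply_of_pos hx]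
    have heT' : ∀ x (hx : ¬ x ∈ T), (e x).val = m + (g' ⟨x, hx⟩).val := by
      intro x hx
      simp [e, Equiv.sumCompl_symm_apply_of_neg hx]
    have hez : (e z).val = 0 := by
      rw [heT z hzT]
      simp [f, Equiv.swap_apply_left]
    have hmemT : ∀ a : Fin n, a.val < m → e.symm a ∈ T := by
      intro a ha
      by_contra hc
      have h1 := heT' _ hc
      rw [Equiv.apply_symm_apply] at h1
      omega
    refine ⟨fun a b => e (mul (e.symm a) (e.symm b)), ⟨?_, ?_, ?_⟩,
      e, fun x y => by simp⟩
    · intro a b _ _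
      have hmem : mul (e.symm a) (e.symm b) ∈ T := by
        simp [hT]
      rw [heT _ hmem]
      exact (f _).isLt
    · intro a b hab
      push_neg at hab
      by_cases ha : m ≤ a.val
      · have hb : b.val < m := by omega
        have h1 : mul (e.symm a) (e.symm b) = z := (hzmul _ _ (hmemT b hb)).2
        show (e (mul (e.symm a) (e.symm b))).val = 0
        rw [h1]; exact hez
      · push_neg at ha
        have h1 : mul (e.symm a) (e.symm b) = z := (hzmul _ _ (hmemT a ha)).1
        show (e (mul (e.symm a) (e.symm b))).val = 0
        rw [h1]; exact hez
    · intro b hb0 hbm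
      have hbT := hmemT b hbm
      have hbz : e.symm b ≠ z := by
        intro h
        rw [← h, Equiv.apply_symm_apply] at hez
        omega
      have : ∃ u v, mul u v = e.symm b := by
        have := hbT
        rw [hT, Finset.mem_filter] at this
        exact this.2
      obtain ⟨u, v, huv⟩ := this
      have hu : u ∉ T := fun h => hbz (huv ▸ (hzmul u v h).1)
      have hv : v ∉ T := fun h => hbz (huv ▸ (hzmul v u h).2)
      refine ⟨e u, e v, ?_, ?_, ?_⟩
      · rw [heT' u hu]; omega
      · rw [heT' v hv]; omega
      · simp [huv]
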